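/- Let n ≥ 3 be odd. Then the alternating bilinear form J on ℤ^n is invariant under each of the generators S_2, …, S_n of 𝒢_n (i.e., J(S_i v, S_i w) = J(v, w) for all v, w and all 2 ≤ i ≤ n), and the kernel of J (the set of v with J(v, w) = 0 for all w ∈ ℤ^n) is the rank-one subgroup ℤ·(1, 1, …, 1) generated by the vector all of whose k-coordinates equal 1. -/
import Mathlib


/-- The index `i - 1` as an element of `Fin n`. -/
def ipred {n : ℕ} (i : Fin n) : Fin n :=
  ⟨(i : ℕ) - 1, lt_of_le_of_lt (Nat.sub_le _ _) i.isLt⟩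

/-- Forward action of the generator `S_{i+1}` (0-indexed `i`) on `ℤ^n`:
for `i = 0` it is `k_0 ↦ k_0`, `k_j ↦ k_j + k_0` (`j ≠ 0`); for `i ≥ 1` it is
`k_{i-1} ↦ 2 k_{i-1} - k_i`, `k_i ↦ k_{i-1}`, fixing the other coordinates. -/
def SFun (n : ℕ) (i : Fin n) (v : Fin n → ℤ) : Fin n → ℤ := fun j =>
  if (i : ℕ) = 0 then (if (j : ℕ) = 0 then v j else v j + v i)
  else
    if j = ipred i then 2 * v j - v i
    else if j = i then v (ipred i) else v j

/-- Inverse of `SFun`. -/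
def SInvFun (n : ℕ) (i : Fin n) (w : Fin n → ℤ) : Fin n → ℤ := fun j =>
  if (i : ℕ) = 0 then (if (j : ℕ) = 0 then w j else w j - w i)
  else
    if j = ipred i then w i
    else if j = i then 2 * w i - w (ipred i) else w j

theorem ipred_ne {n : ℕ} (i : Fin n) (h : ¬ (i : ℕ) = 0) : ipred i ≠ i := by
  intro hc
  have := congrArg Fin.val hc
  simp [ipred] at this
  omega

theorem left_inv_S (n : ℕ) (i : Fin n) (v : Fin n → ℤ) : SInvFun n i (SFun n i v) = v := by
  by_cases h : (i : ℕ) = 0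
  · funext j
    have hi0 : (i : ℕ) = 0 → ((i : ℕ) = 0) := id
    by_cases hj : (j : ℕ) = 0
    · simp [SFun, SInvFun, h, hj]
    · have hji : j ≠ i := by intro hc; exact hj (by rw [hc]; exact h)
      simp [SFun, SInvFun, h, hj]
  · have hne := ipred_ne i h
    funext j
    by_cases h1 : j = ipred i
    · simp [SFun, SInvFun, h, h1, if_neg hne, if_neg (Ne.symm hne)]
    · by_cases h2 : j = i
      · simp [SFun, SInvFun, h, h1, h2, if_neg hne, if_neg (Ne.symm hne)]
        try ring
      · simp [SFun, SInvFun, h, h1, h2]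

theorem right_inv_S (n : ℕ) (i : Fin n) (v : Fin n → ℤ) : SFun n i (SInvFun n i v) = v := by
  by_cases h : (i : ℕ) = 0
  · funext j
    by_cases hj : (j : ℕ) = 0
    · simp [SFun, SInvFun, h, hj]
    · simp [SFun, SInvFun, h, hj]
  · have hne := ipred_ne i h
    funext j
    by_cases h1 : j = ipred i
    · simp [SFun, SInvFun, h, h1, if_neg hne, if_neg (Ne.symm hne)]
      try ring
    · by_cases h2 : j = i
      · simp [SFun, SInvFun, h, h1, h2, if_neg hne, if_neg (Ne.symm hne)]
      · simp [SFun, SInvFun, h, h1, h2]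

theorem map_add_S (n : ℕ) (i : Fin n) (v w : Fin n → ℤ) :
    SFun n i (v + w) = SFun n i v + SFun n i w := by
  funext j
  simp only [SFun, Pi.add_apply]
  split_ifs <;> ring

/-- The generator `S_{i+1}` as a `ℤ`-linear automorphism of `ℤ^n`. -/
def Sgen (n : ℕ) (i : Fin n) : (Fin n → ℤ) ≃ₗ[ℤ] (Fin n → ℤ) :=
  AddEquiv.toIntLinearEquiv
    { toFun := SFun n i
      invFun := SInvFun n i
      left_inv := left_inv_S n i
      right_inv := right_inv_S n i
      map_add' := map_add_S n i }

/-- The group `𝒢_n`: the subgroup of automorphisms of `ℤ^n` generated by `S_1, …, S_n`. -/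
def Gn (n : ℕ) : Subgroup ((Fin n → ℤ) ≃ₗ[ℤ] (Fin n → ℤ)) :=
  Subgroup.closure (Set.range (Sgen n))

/-- `x_i(v) = Σ_{j ≤ i} (−1)^{i−j} k_j` (0-indexed). -/
def xcoord {R : Type*} [CommRing R] {n : ℕ} (i : Fin n) (v : Fin n → R) : R :=
  ∑ j : Fin n, if j ≤ i then (-1 : R) ^ ((i : ℕ) - (j : ℕ)) * v j else 0

/-- The alternating form `J(v,w) = Σ_{i=1}^{n-1} (x_i(v) x_{i+1}(w) − x_{i+1}(v) x_i(w))`. -/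
def Jform {R : Type*} [CommRing R] {n : ℕ} (v w : Fin n → R) : R :=
  ∑ i : Fin n, if h : (i : ℕ) + 1 < n then
      xcoord i v * xcoord ⟨(i : ℕ) + 1, h⟩ w - xcoord ⟨(i : ℕ) + 1, h⟩ v * xcoord i w
    else 0

/-- `γ(v)`: the gcd of the coordinates. -/
def gam {n : ℕ} (v : Fin n → ℤ) : ℤ := Finset.univ.gcd v

open Classical in
/-- `α(v)`: the number of coordinates `i` with `k_i / γ(v)` odd. -/
noncomputable def alph {n : ℕ} (v : Fin n → ℤ) : ℕ :=
  (Finset.univ.filter fun i => Odd (v i / gam v)).card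

/-- `δ(v) = |2 α(v) − n − 1|`. -/
noncomputable def delt {n : ℕ} (v : Fin n → ℤ) : ℤ := |2 * (alph v : ℤ) - (n : ℤ) - 1|

/-- For odd `n`, the invariant `x(v) = k_1 − k_2 + ⋯ + k_n`. -/
def xalt {n : ℕ} (v : Fin n → ℤ) : ℤ := ∑ j : Fin n, (-1 : ℤ) ^ (j : ℕ) * v j


namespace JAux


def Yc (n : ℕ) (v : Fin n → ℤ) (m : ℤ) : ℤ :=
  ∑ j : Fin n, if ((j : ℕ) : ℤ) ≤ m ∧ m < (n : ℤ) then (-1 : ℤ) ^ (m - ((j : ℕ) : ℤ)).toNat * v j else 0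

lemma Yc_of_neg {n : ℕ} (v : Fin n → ℤ) {m : ℤ} (h : m < 0) : Yc n v m = 0 := by
  apply Finset.sum_eq_zero; intro j _
  rw [if_neg]; rintro ⟨h1, -⟩; omega

lemma Yc_of_ge {n : ℕ} (v : Fin n → ℤ) {m : ℤ} (h : (n : ℤ) ≤ m) : Yc n v m = 0 := by
  apply Finset.sum_eq_zero; intro j _
  rw [if_neg]; rintro ⟨-, h2⟩; omega

lemma Yc_coe {n : ℕ} (v : Fin n → ℤ) (i : Fin n) : Yc n v ((i : ℕ) : ℤ) = xcoord i v := by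
  unfold Yc xcoord
  apply Finset.sum_congr rfl
  intro j _
  by_cases h : j ≤ i
  · have hv : (j : ℕ) ≤ (i : ℕ) := h
    rw [if_pos, if_pos h]
    · congr 2
      omega
    · exact ⟨by exact_mod_cast hv, by exact_mod_cast i.isLt⟩
  · have hv : ¬ (j : ℕ) ≤ (i : ℕ) := h
    rw [if_neg, if_neg h]
    rintro ⟨h1, -⟩
    exact hv (by exact_mod_cast h1)

lemma Yc_add_smul {n : ℕ} (v u : Fin n → ℤ) (c : ℤ) (m : ℤ) :
    Yc n (fun l => v l + c * u l) m = Yc n v m + c * Yc n u m := by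
  unfold Yc
  rw [Finset.mul_sum, ← Finset.sum_add_distrib]
  apply Finset.sum_congr rfl
  intro j _
  split_ifs <;> ring

lemma Yc_apply_ite {n : ℕ} (c : ℤ) (a : Fin n) (m : ℤ) :
    Yc n (fun l => if l = a then c else 0) m
      = if ((a : ℕ) : ℤ) ≤ m ∧ m < (n : ℤ) then (-1 : ℤ) ^ (m - ((a : ℕ) : ℤ)).toNat * c else 0 := by
  unfold Yc
  rw [Finset.sum_eq_single a]
  · simp
  · intro b _ hb
    simp [hb]
  · simp

lemma apply_eq_Yc {n : ℕ} (v : Fin n → ℤ) (a : Fin n) :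
    v a = Yc n v ((a : ℕ) : ℤ) + Yc n v (((a : ℕ) : ℤ) - 1) := by
  unfold Yc
  rw [← Finset.sum_add_distrib, Finset.sum_eq_single a]
  · have h1 : (((a : ℕ) : ℤ) ≤ ((a : ℕ) : ℤ) ∧ ((a : ℕ) : ℤ) < (n : ℤ)) := ⟨le_refl _, by exact_mod_cast a.isLt⟩
    rw [if_pos h1, if_neg (by omega : ¬ (((a : ℕ) : ℤ) ≤ ((a : ℕ) : ℤ) - 1 ∧ ((a : ℕ) : ℤ) - 1 < (n : ℤ)))]
    simp
  · intro b _ hb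
    have hv : (b : ℕ) ≠ (a : ℕ) := fun h => hb (Fin.ext h)
    by_cases hle : ((b : ℕ) : ℤ) ≤ ((a : ℕ) : ℤ) - 1
    · rw [if_pos, if_pos]
      · have hk : (((a : ℕ) : ℤ) - ((b : ℕ) : ℤ)).toNat = (((a : ℕ) : ℤ) - 1 - ((b : ℕ) : ℤ)).toNat + 1 := by omega
        rw [hk, pow_succ]
        ring
      · exact ⟨by omega, by have := a.isLt; omega⟩
      · exact ⟨by omega, by exact_mod_cast a.isLt⟩
    · rw [if_neg, if_neg]
      · simp
      · rintro ⟨h1, -⟩; omega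
      · rintro ⟨h1, -⟩; omega
  · simp



def pairv (n : ℕ) (j : ℕ) : Fin n → ℤ := fun l =>
  (if (l : ℕ) = j then 1 else 0) + (if (l : ℕ) = j + 1 then 1 else 0)

lemma Yc_pair {n : ℕ} (j : ℕ) (hj : j < n) (m : ℤ) :
    Yc n (pairv n j) m = if m = (j : ℤ) then 1 else 0 := by
  have ha : pairv n j = fun l =>
      (if l = (⟨j, hj⟩ : Fin n) then (1 : ℤ) else 0) + 1 * (if (l : ℕ) = j + 1 then 1 else 0) := by
    funext l
    simp only [pairv, Fin.ext_iff, one_mul]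
  rw [ha, Yc_add_smul, Yc_apply_ite, one_mul]
  by_cases hj1 : j + 1 < n
  · have hb : (fun l : Fin n => if (l : ℕ) = j + 1 then (1:ℤ) else 0)
        = fun l => if l = (⟨j+1, hj1⟩ : Fin n) then (1:ℤ) else 0 := by
      funext l; simp only [Fin.ext_iff]
    rw [hb, Yc_apply_ite]
    simp only [mul_one]
    by_cases h0 : m = (j : ℤ)
    · subst h0
      rw [if_pos ⟨le_refl _, by exact_mod_cast hj⟩, if_neg (by push_cast; omega), if_pos rfl]
      simp
    · rw [if_neg h0]
      by_cases h1 : ((j:ℕ):ℤ) ≤ m ∧ m < (n:ℤ)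
      · rw [if_pos h1, if_pos (by push_cast at h1 ⊢; omega)]
        have hk : (m - ((j:ℕ):ℤ)).toNat = (m - (((j:ℕ):ℤ) + 1)).toNat + 1 := by push_cast at h1; omega
        push_cast
        push_cast at hk
        rw [hk, pow_succ]
        ring
      · rw [if_neg h1, if_neg (by push_cast at h1 ⊢; omega)]
        simp
  · have hb : Yc n (fun l : Fin n => if (l : ℕ) = j + 1 then (1:ℤ) else 0) m = 0 := by
      apply Finset.sum_eq_zero
      intro l _
      have := l.isLt
      split_ifs with h1 h2 <;> simp_all <;> omega
    rw [hb]
    by_cases h0 : m = (j : ℤ)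
    · subst h0
      rw [if_pos ⟨le_refl _, by exact_mod_cast hj⟩]
      simp
    · rw [if_neg h0, if_neg]
      · simp
      · rintro ⟨h1, h2⟩
        simp only [Fin.val_mk] at h1
        omega


end JAux

namespace JAux

lemma Jform_eq {n : ℕ} (v w : Fin n → ℤ) :
    Jform v w = ∑ m ∈ Finset.range n,
      (Yc n v (m : ℤ) * Yc n w ((m : ℤ) + 1) - Yc n v ((m : ℤ) + 1) * Yc n w (m : ℤ)) := by
  rw [← Fin.sum_univ_eq_sum_range
    (fun m : ℕ => Yc n v (m : ℤ) * Yc n w ((m : ℤ) + 1) - Yc n v ((m : ℤ) + 1) * Yc n w (m : ℤ)) n]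
  unfold Jform
  apply Finset.sum_congr rfl
  intro i _
  by_cases h : (i : ℕ) + 1 < n
  · rw [dif_pos h]
    have h1 : Yc n v ((i : ℕ) : ℤ) = xcoord i v := Yc_coe v i
    have h2 : Yc n w ((i : ℕ) : ℤ) = xcoord i w := Yc_coe w i
    have h3 : Yc n v (((i : ℕ) : ℤ) + 1) = xcoord (⟨(i:ℕ)+1, h⟩ : Fin n) v := by
      have := Yc_coe v (⟨(i:ℕ)+1, h⟩ : Fin n); push_cast at this ⊢; exact this
    have h4 : Yc n w (((i : ℕ) : ℤ) + 1) = xcoord (⟨(i:ℕ)+1, h⟩ : Fin n) w := by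
      have := Yc_coe w (⟨(i:ℕ)+1, h⟩ : Fin n); push_cast at this ⊢; exact this
    rw [h1, h2, h3, h4]
  · rw [dif_neg h]
    have h5 : ((n:ℤ)) ≤ ((i:ℕ):ℤ) + 1 := by omega
    rw [Yc_of_ge v h5, Yc_of_ge w h5]
    ring

lemma SFun_eq {n : ℕ} (i : Fin n) (hi : (i : ℕ) ≠ 0) (v : Fin n → ℤ) :
    SFun n i v = fun l => v l + (v (ipred i) - v i) * pairv n ((i : ℕ) - 1) l := by
  funext l
  have hlt := i.isLt
  simp only [SFun, pairv, if_neg hi]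
  by_cases h1 : l = ipred i
  · have hl : (l : ℕ) = (i : ℕ) - 1 := by rw [h1]; rfl
    rw [if_pos h1, if_pos hl, if_neg (by omega : ¬ (l:ℕ) = (i:ℕ) - 1 + 1), ← h1]
    ring
  · have hl : ¬ (l : ℕ) = (i : ℕ) - 1 := by
      intro hc; exact h1 (Fin.ext hc)
    rw [if_neg h1, if_neg hl]
    by_cases h2 : l = i
    · have hl2 : (l : ℕ) = (i : ℕ) - 1 + 1 := by rw [h2]; omega
      rw [if_pos h2, if_pos hl2, h2]
      ring
    · have hl2 : ¬ (l : ℕ) = (i : ℕ) - 1 + 1 := by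
        intro hc; exact h2 (Fin.ext (by omega))
      rw [if_neg h2, if_neg hl2]
      ring

lemma Yc_SFun {n : ℕ} (i : Fin n) (hi : (i : ℕ) ≠ 0) (v : Fin n → ℤ) (m : ℤ) :
    Yc n (SFun n i v) m = Yc n v m +
      (if m = ((i : ℕ) : ℤ) - 1 then Yc n v (((i : ℕ) : ℤ) - 2) - Yc n v ((i : ℕ) : ℤ) else 0) := by
  have hlt := i.isLt
  rw [SFun_eq i hi v, Yc_add_smul, Yc_pair _ (by omega : (i : ℕ) - 1 < n)]
  have hp : v (ipred i) = Yc n v (((i:ℕ):ℤ) - 1) + Yc n v (((i:ℕ):ℤ) - 2) := by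
    have := apply_eq_Yc v (ipred i)
    have hval : ((ipred i : Fin n) : ℕ) = (i : ℕ) - 1 := rfl
    rw [hval] at this
    rw [this]
    congr 1 <;> congr 1 <;> omega
  have hq : v i = Yc n v ((i:ℕ):ℤ) + Yc n v (((i:ℕ):ℤ) - 1) := apply_eq_Yc v i
  have hc : ((((i:ℕ) - 1 : ℕ)) : ℤ) = ((i:ℕ):ℤ) - 1 := by omega
  rw [hc, hp, hq]
  split_ifs <;> ring

end JAux

namespace JAux

lemma Jform_SFun {n : ℕ} (i : Fin n) (hi : (i : ℕ) ≠ 0) (v w : Fin n → ℤ) :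
    Jform (SFun n i v) (SFun n i w) = Jform v w := by
  have hlt := i.isLt
  rw [Jform_eq, Jform_eq]
  set p : ℤ := ((i : ℕ) : ℤ) - 1 with hp
  have hYv : ∀ m : ℤ, Yc n (SFun n i v) m
      = Yc n v m + (if m = p then Yc n v (p - 1) - Yc n v (p + 1) else 0) := by
    intro m
    rw [Yc_SFun i hi v m]
    congr 1
    split_ifs <;> [skip; rfl]
    congr 2 <;> omega
  have hYw : ∀ m : ℤ, Yc n (SFun n i w) m
      = Yc n w m + (if m = p then Yc n w (p - 1) - Yc n w (p + 1) else 0) := by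
    intro m
    rw [Yc_SFun i hi w m]
    congr 1
    split_ifs <;> [skip; rfl]
    congr 2 <;> omega
  set dv : ℤ := Yc n v (p - 1) - Yc n v (p + 1) with hdv
  set dw : ℤ := Yc n w (p - 1) - Yc n w (p + 1) with hdw
  have key : ∀ m ∈ Finset.range n,
      Yc n (SFun n i v) (m : ℤ) * Yc n (SFun n i w) ((m : ℤ) + 1)
        - Yc n (SFun n i v) ((m : ℤ) + 1) * Yc n (SFun n i w) (m : ℤ)
      = (Yc n v (m : ℤ) * Yc n w ((m : ℤ) + 1) - Yc n v ((m : ℤ) + 1) * Yc n w (m : ℤ))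
        + ((if (m : ℤ) = p then dv * Yc n w (p + 1) - dw * Yc n v (p + 1) else 0)
          + (if (m : ℤ) = p - 1 then dw * Yc n v (p - 1) - dv * Yc n w (p - 1) else 0)) := by
    intro m _
    rw [hYv, hYw, hYv, hYw]
    by_cases h1 : (m : ℤ) = p
    · rw [if_pos h1, if_pos h1, if_neg (by omega), if_neg (by omega), if_pos h1,
        if_neg (by omega : ¬ (m : ℤ) = p - 1), h1]
      ring
    · rw [if_neg h1, if_neg h1, if_neg h1]
      by_cases h2 : (m : ℤ) + 1 = p
      · rw [if_pos h2, if_pos h2, if_pos (by omega : (m : ℤ) = p - 1)]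
        have hm : (m : ℤ) = p - 1 := by omega
        rw [hm]
        ring
      · rw [if_neg h2, if_neg h2, if_neg (by omega : ¬ (m : ℤ) = p - 1)]
        ring
  rw [Finset.sum_congr rfl key, Finset.sum_add_distrib, Finset.sum_add_distrib]
  have e1 : ∑ m ∈ Finset.range n, (if (m : ℤ) = p then dv * Yc n w (p + 1) - dw * Yc n v (p + 1) else 0)
      = dv * Yc n w (p + 1) - dw * Yc n v (p + 1) := by
    have hcong : ∀ m ∈ Finset.range n,
        (if (m : ℤ) = p then dv * Yc n w (p + 1) - dw * Yc n v (p + 1) else 0)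
        = (if m = (i : ℕ) - 1 then dv * Yc n w (p + 1) - dw * Yc n v (p + 1) else 0) := by
      intro m _
      congr 1
      simp only [eq_iff_iff]
      omega
    rw [Finset.sum_congr rfl hcong, Finset.sum_ite_eq' (Finset.range n)]
    rw [if_pos (Finset.mem_range.mpr (by omega))]
  by_cases h2 : 2 ≤ (i : ℕ)
  · have e2 : ∑ m ∈ Finset.range n, (if (m : ℤ) = p - 1 then dw * Yc n v (p - 1) - dv * Yc n w (p - 1) else 0)
        = dw * Yc n v (p - 1) - dv * Yc n w (p - 1) := by
      have hcong : ∀ m ∈ Finset.range n,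
          (if (m : ℤ) = p - 1 then dw * Yc n v (p - 1) - dv * Yc n w (p - 1) else 0)
          = (if m = (i : ℕ) - 2 then dw * Yc n v (p - 1) - dv * Yc n w (p - 1) else 0) := by
        intro m _
        congr 1
        simp only [eq_iff_iff]
        omega
      rw [Finset.sum_congr rfl hcong, Finset.sum_ite_eq' (Finset.range n)]
      rw [if_pos (Finset.mem_range.mpr (by omega))]
    rw [e1, e2, hdv, hdw]
    ring
  · have hp0 : p = 0 := by omega
    have e2 : ∑ m ∈ Finset.range n, (if (m : ℤ) = p - 1 then dw * Yc n v (p - 1) - dv * Yc n w (p - 1) else 0)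
        = 0 := by
      apply Finset.sum_eq_zero
      intro m _
      rw [if_neg (by omega)]
    rw [e1, e2, hdv, hdw, hp0]
    have z1 : Yc n v (0 - 1) = 0 := Yc_of_neg v (by norm_num)
    have z2 : Yc n w (0 - 1) = 0 := Yc_of_neg w (by norm_num)
    rw [z1, z2]
    ring
end JAux

namespace JAux

lemma Jform_pair {n : ℕ} (v : Fin n → ℤ) (j : ℕ) (hj : j < n) :
    Jform v (pairv n j) = Yc n v ((j : ℤ) - 1) - Yc n v ((j : ℤ) + 1) := by
  rw [Jform_eq]
  have hcong : ∀ m ∈ Finset.range n,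
      (Yc n v (m : ℤ) * Yc n (pairv n j) ((m : ℤ) + 1) - Yc n v ((m : ℤ) + 1) * Yc n (pairv n j) (m : ℤ))
      = (if m + 1 = j then Yc n v ((j : ℤ) - 1) else 0) - (if m = j then Yc n v ((j : ℤ) + 1) else 0) := by
    intro m _
    rw [Yc_pair j hj, Yc_pair j hj]
    by_cases h1 : m + 1 = j
    · rw [if_pos h1, if_pos (by omega : (m : ℤ) + 1 = (j : ℤ)), if_neg (by omega : ¬ m = j),
        if_neg (by omega : ¬ (m : ℤ) = (j : ℤ))]
      have : (m : ℤ) = (j : ℤ) - 1 := by omega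
      rw [this]
      ring
    · rw [if_neg h1, if_neg (by omega : ¬ (m : ℤ) + 1 = (j : ℤ))]
      by_cases h2 : m = j
      · rw [if_pos h2, if_pos (by omega : (m : ℤ) = (j : ℤ))]
        have : (m : ℤ) + 1 = (j : ℤ) + 1 := by omega
        rw [this]
        ring
      · rw [if_neg h2, if_neg (by omega : ¬ (m : ℤ) = (j : ℤ))]
        ring
  rw [Finset.sum_congr rfl hcong, Finset.sum_sub_distrib,
    Finset.sum_ite_eq' (Finset.range n) j, if_pos (Finset.mem_range.mpr hj)]
  congr 1
  by_cases h0 : 1 ≤ j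
  · have hcong2 : ∀ m ∈ Finset.range n,
        (if m + 1 = j then Yc n v ((j : ℤ) - 1) else 0)
        = (if m = j - 1 then Yc n v ((j : ℤ) - 1) else 0) := by
      intro m _
      congr 1
      simp only [eq_iff_iff]
      omega
    rw [Finset.sum_congr rfl hcong2, Finset.sum_ite_eq' (Finset.range n),
      if_pos (Finset.mem_range.mpr (by omega))]
  · have hj0 : j = 0 := by omega
    subst hj0
    rw [Finset.sum_eq_zero (fun m _ => if_neg (by omega)), Yc_of_neg v (by norm_num)]

lemma kernel_const {n : ℕ} (hn : 3 ≤ n) (v : Fin n → ℤ) (hv : ∀ w, Jform v w = 0) :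
    ∀ a : Fin n, v a = Yc n v 0 := by
  have hrel : ∀ j : ℕ, j < n → Yc n v ((j : ℤ) - 1) = Yc n v ((j : ℤ) + 1) := by
    intro j hj
    have := hv (pairv n j)
    rw [Jform_pair v j hj] at this
    omega
  have claim : ∀ m : ℕ, m < n → Yc n v (m : ℤ) = if m % 2 = 0 then Yc n v 0 else 0 := by
    intro m
    induction m using Nat.strong_induction_on with
    | _ m ih =>
      intro hm
      match m with
      | 0 => simp
      | 1 =>
        have h0 := hrel 0 (by omega)
        norm_num at h0
        rw [Yc_of_neg v (by norm_num : (-1:ℤ) < 0)] at h0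
        norm_num
        exact h0.symm
      | (m + 2) =>
        have h1 := hrel (m + 1) (by omega)
        have hc1 : ((m + 1 : ℕ) : ℤ) - 1 = (m : ℤ) := by push_cast; ring
        have hc2 : ((m + 1 : ℕ) : ℤ) + 1 = ((m + 2 : ℕ) : ℤ) := by push_cast; ring
        rw [hc1, hc2] at h1
        rw [← h1, ih m (by omega) (by omega)]
        have : (m + 2) % 2 = m % 2 := by omega
        rw [this]
  intro a
  rw [apply_eq_Yc v a]
  by_cases h0 : (a : ℕ) = 0
  · rw [h0]
    norm_num
    exact Yc_of_neg v (by norm_num)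
  · have hc : ((a : ℕ) : ℤ) - 1 = (((a : ℕ) - 1 : ℕ) : ℤ) := by omega
    rw [hc, claim (a : ℕ) a.isLt, claim ((a : ℕ) - 1) (by have := a.isLt; omega)]
    rcases Nat.even_or_odd (a : ℕ) with h | h
    · rw [if_pos (by rcases h with ⟨k, hk⟩; omega : (a : ℕ) % 2 = 0),
        if_neg (by rcases h with ⟨k, hk⟩; omega)]
      ring
    · rw [if_neg (by rcases h with ⟨k, hk⟩; omega), if_pos (by rcases h with ⟨k, hk⟩; omega)]
      ring

lemma Yc_const {n : ℕ} (c : ℤ) : ∀ m : ℕ, m < n → Yc n (fun _ => c) (m : ℤ) = if m % 2 = 0 then c else 0 := by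
  intro m
  induction m with
  | zero =>
    intro hm
    have := apply_eq_Yc (fun _ => c) (⟨0, hm⟩ : Fin n)
    simp only [Fin.val_mk, Nat.cast_zero] at this
    rw [Yc_of_neg _ (by norm_num : (0:ℤ) - 1 < 0)] at this
    simpa using this.symm
  | succ m ih =>
    intro hm
    have := apply_eq_Yc (fun _ => c) (⟨m + 1, hm⟩ : Fin n)
    simp only [Fin.val_mk] at this
    have hc : ((m + 1 : ℕ) : ℤ) - 1 = (m : ℤ) := by push_cast; ring
    rw [hc, ih (by omega)] at this
    rcases Nat.even_or_odd m with h | h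
    · rw [if_pos (by rcases h with ⟨k,hk⟩; omega)] at this
      rw [if_neg (by rcases h with ⟨k,hk⟩; omega)]
      omega
    · rw [if_neg (by rcases h with ⟨k,hk⟩; omega)] at this
      rw [if_pos (by rcases h with ⟨k,hk⟩; omega)]
      omega

lemma Jform_const {n : ℕ} (hodd : n % 2 = 1) (c : ℤ) (w : Fin n → ℤ) :
    Jform (fun _ : Fin n => c) w = 0 := by
  rw [Jform_eq]
  have key : ∀ m ∈ Finset.range n,
      (Yc n (fun _ => c) (m : ℤ) * Yc n w ((m : ℤ) + 1) - Yc n (fun _ => c) ((m : ℤ) + 1) * Yc n w (m : ℤ))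
      = (if (m + 1) % 2 = 1 then c * Yc n w ((m + 1 : ℕ) : ℤ) else 0)
        - (if m % 2 = 1 then c * Yc n w (m : ℤ) else 0) := by
    intro m hm
    have hm' : m < n := Finset.mem_range.mp hm
    have hcast : ((m + 1 : ℕ) : ℤ) = (m : ℤ) + 1 := by push_cast; ring
    rw [Yc_const c m hm']
    rcases Nat.even_or_odd m with h | h
    · have he : m % 2 = 0 := by rcases h with ⟨k,hk⟩; omega
      have hYc1 : Yc n (fun _ : Fin n => c) ((m : ℤ) + 1) = 0 := by
        by_cases h1 : m + 1 < n
        · rw [← hcast, Yc_const c (m+1) h1, if_neg (by omega)]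
        · exact Yc_of_ge _ (by omega)
      rw [hYc1, if_pos he, if_pos (by omega : (m+1) % 2 = 1), if_neg (by omega : ¬ m % 2 = 1), hcast]
      ring
    · have he : m % 2 = 1 := by rcases h with ⟨k,hk⟩; omega
      have h1 : m + 1 < n := by omega
      rw [← hcast, Yc_const c (m+1) h1, if_pos (by omega : (m+1) % 2 = 0), if_neg (by omega : ¬ m % 2 = 0),
        if_neg (by omega : ¬ (m+1) % 2 = 1), if_pos he, hcast]
      ring
  rw [Finset.sum_congr rfl key, Finset.sum_range_sub (fun m => if m % 2 = 1 then c * Yc n w (m : ℤ) else 0)]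
  rw [if_pos hodd, Yc_of_ge w (by omega)]
  norm_num

end JAux
/-- For odd `n ≥ 3`, the form `J` is invariant under the generators
`S_2, …, S_n` of `𝒢_n`, and its kernel is the rank-one subgroup `ℤ·(1,1,…,1)`. -/
theorem Jform_invariant_and_kernel_odd (n : ℕ) (hn : 3 ≤ n) (hodd : Odd n) :
    (∀ i : Fin n, (i : ℕ) ≠ 0 → ∀ v w : Fin n → ℤ,
        Jform (Sgen n i v) (Sgen n i w) = Jform v w) ∧
    {v : Fin n → ℤ | ∀ w, Jform v w = 0} =
      Set.range (fun c : ℤ => (fun _ : Fin n => c)) := by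
  constructor
  · intro i hi v w
    have hs : ∀ u : Fin n → ℤ, Sgen n i u = SFun n i u := fun u => rfl
    rw [hs, hs]
    exact JAux.Jform_SFun i hi v w
  · ext v
    simp only [Set.mem_setOf_eq, Set.mem_range]
    constructor
    · intro hv
      exact ⟨JAux.Yc n v 0, funext (fun a => (JAux.kernel_const hn v hv a).symm)⟩
    · rintro ⟨c, rfl⟩
      intro w
      exact JAux.Jform_const (Nat.odd_iff.mp hodd) c w
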